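/- Let (p_i)_{i≥1} be a family of mutually orthogonal orthogonal projections on H. For every compact operator x on H, the family (p_i x p_i)_{i≥1} is summable in the operator norm of B(H); in particular the pinching P(x) = Σ_{i≥1} p_i x p_i is a well-defined bounded operator, and P(x) is itself compact. -/

import Mathlib

open scoped InnerProductSpace

section Aux

variable {H : Type*} [NormedAddCommGroup H] [InnerProductSpace ℂ H] [CompleteSpace H]

/-- A self-adjoint idempotent is a contraction. -/
lemma aux_contraction (q : H →L[ℂ] H) (hq : IsSelfAdjoint q) (h2 : q * q = q) (ζ : H) :
    ‖q ζ‖ ≤ ‖ζ‖ := by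
  have hsym := hq.isSymmetric
  have h1 : (⟪q ζ, q ζ⟫_ℂ) = ⟪ζ, q ζ⟫_ℂ := by
    have e2 : q (q ζ) = q ζ := by
      rw [show q (q ζ) = (q * q) ζ from rfl, h2]
    simpa [e2] using hsym ζ (q ζ)
  have h3 : ‖q ζ‖ ^ 2 = RCLike.re (⟪ζ, q ζ⟫_ℂ) := by
    rw [← h1, inner_self_eq_norm_sq]
  have h4 : RCLike.re (⟪ζ, q ζ⟫_ℂ) ≤ ‖ζ‖ * ‖q ζ‖ :=
    le_trans (RCLike.re_le_norm _) (norm_inner_le_norm _ _)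
  nlinarith [norm_nonneg (q ζ), norm_nonneg ζ]

/-- Pythagoras for a finite pairwise-orthogonal family. -/
lemma aux_pythagoras {ι : Type*} (t : Finset ι) (u : ι → H)
    (h : ∀ i ∈ t, ∀ j ∈ t, i ≠ j → (⟪u i, u j⟫_ℂ) = 0) :
    ‖∑ i ∈ t, u i‖ ^ 2 = ∑ i ∈ t, ‖u i‖ ^ 2 := by
  have key : (⟪∑ i ∈ t, u i, ∑ j ∈ t, u j⟫_ℂ) = ∑ i ∈ t, ⟪u i, u i⟫_ℂ := by
    rw [sum_inner]
    refine Finset.sum_congr rfl fun i hi => ?_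
    rw [inner_sum]
    rw [Finset.sum_eq_single i (fun j hj hne => h i hi j hj (Ne.symm hne)) (fun h' => absurd hi h')]
  have h2 := congrArg RCLike.re key
  rw [inner_self_eq_norm_sq] at h2
  rw [h2, map_sum]
  exact Finset.sum_congr rfl fun i _ => inner_self_eq_norm_sq (u i)

end Aux

theorem pinching_summable_and_compact
    {H : Type*} [NormedAddCommGroup H] [InnerProductSpace ℂ H] [CompleteSpace H]
    [TopologicalSpace.SeparableSpace H]
    (hinf : ¬ FiniteDimensional ℂ H)
    (p : ℕ → H →L[ℂ] H)
    (hsa : ∀ i, IsSelfAdjoint (p i))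
    (hidem : ∀ i, p i * p i = p i)
    (horth : ∀ i j, i ≠ j → p i * p j = 0)
    (x : H →L[ℂ] H) (hx : IsCompactOperator ⇑x) :
    Summable (fun i => p i * x * p i) ∧
      IsCompactOperator ⇑(∑' i, p i * x * p i) := by
  -- each p i is a contraction
  have hcontr : ∀ i (ζ : H), ‖p i ζ‖ ≤ ‖ζ‖ := fun i => aux_contraction _ (hsa i) (hidem i)
  -- ranges orthogonal
  have hortho_inner : ∀ i j, i ≠ j → ∀ a b : H, (⟪p i a, p j b⟫_ℂ) = 0 := by
    intro i j hij a b
    have hsym := (hsa i).isSymmetric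
    have h1 : (⟪p i a, p j b⟫_ℂ) = ⟪a, p i (p j b)⟫_ℂ := hsym a (p j b)
    rw [h1, show p i (p j b) = (p i * p j) b from rfl, horth i j hij]
    simp
  -- Bessel-type inequality
  have hbessel : ∀ (F : Finset ℕ) (ζ : H), ∑ i ∈ F, ‖p i ζ‖ ^ 2 ≤ ‖ζ‖ ^ 2 := by
    intro F ζ
    set q : H →L[ℂ] H := ∑ i ∈ F, p i with hq
    have hq_sa : IsSelfAdjoint q := by
      show star q = q
      rw [hq, star_sum]
      exact Finset.sum_congr rfl fun i _ => hsa i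
    have hq2 : q * q = q := by
      rw [hq, Finset.sum_mul_sum]
      refine Finset.sum_congr rfl fun i hi => ?_
      rw [Finset.sum_eq_single i (fun j hj hne => horth i j (Ne.symm hne))
        (fun h' => absurd hi h')]
      exact hidem i
    have hqle : ‖q ζ‖ ≤ ‖ζ‖ := aux_contraction q hq_sa hq2 ζ
    have hpyth : ‖q ζ‖ ^ 2 = ∑ i ∈ F, ‖p i ζ‖ ^ 2 := by
      rw [show q ζ = ∑ i ∈ F, p i ζ from ContinuousLinearMap.sum_apply _ _ _]
      exact aux_pythagoras F (fun i => p i ζ) (fun i _ j _ hij => hortho_inner i j hij ζ ζ)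
    rw [← hpyth]
    exact pow_le_pow_left₀ (norm_nonneg _) hqle 2
  -- block estimate
  have hblock : ∀ (t : Finset ℕ) (C : ℝ), 0 ≤ C → (∀ i ∈ t, ‖p i * x * p i‖ ≤ C) →
      ‖∑ i ∈ t, p i * x * p i‖ ≤ C := by
    intro t C hC h
    refine ContinuousLinearMap.opNorm_le_bound _ hC fun ζ => ?_
    rw [show (∑ i ∈ t, p i * x * p i) ζ = ∑ i ∈ t, (p i * x * p i) ζ from
      ContinuousLinearMap.sum_apply _ _ _]
    have hsq : ‖∑ i ∈ t, (p i * x * p i) ζ‖ ^ 2 = ∑ i ∈ t, ‖(p i * x * p i) ζ‖ ^ 2 := by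
      refine aux_pythagoras t _ fun i hi j hj hij => ?_
      rw [show (p i * x * p i) ζ = p i ((x * p i) ζ) from rfl,
        show (p j * x * p j) ζ = p j ((x * p j) ζ) from rfl]
      exact hortho_inner i j hij _ _
    have hterm : ∀ i ∈ t, ‖(p i * x * p i) ζ‖ ^ 2 ≤ C ^ 2 * ‖p i ζ‖ ^ 2 := by
      intro i hi
      have heq : (p i * x * p i) ζ = (p i * x * p i) (p i ζ) := by
        calc (p i * x * p i) ζ = ((p i * x) * (p i * p i)) ζ := by rw [hidem i]
        _ = (p i * x * p i) (p i ζ) := rfl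
      rw [heq]
      have hb : ‖(p i * x * p i) (p i ζ)‖ ≤ C * ‖p i ζ‖ :=
        le_trans ((p i * x * p i).le_opNorm _)
          (mul_le_mul_of_nonneg_right (h i hi) (norm_nonneg _))
      calc ‖(p i * x * p i) (p i ζ)‖ ^ 2 ≤ (C * ‖p i ζ‖) ^ 2 :=
            pow_le_pow_left₀ (norm_nonneg _) hb 2
        _ = C ^ 2 * ‖p i ζ‖ ^ 2 := by ring
    have hfin : ‖∑ i ∈ t, (p i * x * p i) ζ‖ ^ 2 ≤ (C * ‖ζ‖) ^ 2 := by
      rw [hsq, mul_pow]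
      calc ∑ i ∈ t, ‖(p i * x * p i) ζ‖ ^ 2 ≤ ∑ i ∈ t, C ^ 2 * ‖p i ζ‖ ^ 2 :=
            Finset.sum_le_sum hterm
        _ = C ^ 2 * ∑ i ∈ t, ‖p i ζ‖ ^ 2 := by rw [Finset.mul_sum]
        _ ≤ C ^ 2 * ‖ζ‖ ^ 2 := mul_le_mul_of_nonneg_left (hbessel t ζ) (sq_nonneg C)
    nlinarith [norm_nonneg (∑ i ∈ t, (p i * x * p i) ζ), mul_nonneg hC (norm_nonneg ζ)]
  -- key finiteness
  have hkey : ∀ ε : ℝ, 0 < ε → {i : ℕ | ε < ‖p i * x * p i‖}.Finite := by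
    intro ε hε
    by_contra hT
    have hTinf : {i : ℕ | ε < ‖p i * x * p i‖}.Infinite := hT
    set e := Set.Infinite.natEmbedding _ hTinf with he
    set idx : ℕ → ℕ := fun k => (e k : ℕ) with hidx
    have hidx_inj : Function.Injective idx := fun a b hab => e.injective (Subtype.ext hab)
    have hidxT : ∀ k, ε < ‖p (idx k) * x * p (idx k)‖ := fun k => (e k).2
    have hwit : ∀ k, ∃ ζ : H, ε * ‖ζ‖ < ‖(p (idx k) * x * p (idx k)) ζ‖ := by
      intro k
      by_contra hc
      push_neg at hc
      exact absurd (ContinuousLinearMap.opNorm_le_bound _ hε.le fun ζ => hc ζ)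
        (not_le.2 (hidxT k))
    choose ξ hξ using hwit
    have hξne : ∀ k, ξ k ≠ 0 := by
      intro k h0
      have hk := hξ k
      rw [h0] at hk
      simpa using hk
    set η : ℕ → H := fun k => ‖ξ k‖⁻¹ • (p (idx k) (ξ k)) with hη
    have hηnorm : ∀ k, ‖η k‖ ≤ 1 := by
      intro k
      have hpos : 0 < ‖ξ k‖ := norm_pos_iff.2 (hξne k)
      rw [hη]
      simp only [norm_smul, norm_inv, norm_norm]
      calc ‖ξ k‖⁻¹ * ‖p (idx k) (ξ k)‖ ≤ ‖ξ k‖⁻¹ * ‖ξ k‖ :=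
            mul_le_mul_of_nonneg_left (hcontr (idx k) (ξ k)) (inv_nonneg.2 (norm_nonneg _))
        _ = 1 := inv_mul_cancel₀ hpos.ne'
    have hηlow : ∀ k, ε < ‖p (idx k) (x (η k))‖ := by
      intro k
      have hpos : 0 < ‖ξ k‖ := norm_pos_iff.2 (hξne k)
      have heq : p (idx k) (x (η k)) = ‖ξ k‖⁻¹ • ((p (idx k) * x * p (idx k)) (ξ k)) := by
        rw [hη]
        rw [x.map_smul_of_tower, (p (idx k)).map_smul_of_tower]
        rfl
      rw [heq, norm_smul, norm_inv, norm_norm]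
      have h2 := (mul_lt_mul_iff_right₀ (inv_pos.2 hpos)).2 (hξ k)
      have h3 : ‖ξ k‖⁻¹ * (ε * ‖ξ k‖) = ε := by field_simp
      linarith
    obtain ⟨K, hK, hKmem⟩ := hx
    obtain ⟨δ, hδ, hball⟩ := Metric.mem_nhds_iff.1 hKmem
    have hδ2 : (0:ℝ) < δ / 2 := by linarith
    set v : ℕ → H := fun k => x ((δ/2) • η k) with hv
    have hvK : ∀ k, v k ∈ K := by
      intro k
      apply hball
      rw [Metric.mem_ball, dist_zero_right, norm_smul, Real.norm_eq_abs, abs_of_pos hδ2]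
      calc δ/2 * ‖η k‖ ≤ δ/2 * 1 := mul_le_mul_of_nonneg_left (hηnorm k) hδ2.le
        _ < δ := by linarith
    obtain ⟨y, _, φ, hφ, hconv⟩ := hK.tendsto_subseq hvK
    set z : H := (δ/2)⁻¹ • y with hz
    have hconv' : Filter.Tendsto (fun k => x (η (φ k))) Filter.atTop (nhds z) := by
      have h1 : (fun k => x (η (φ k))) = fun k => (δ/2)⁻¹ • v (φ k) := by
        funext k
        rw [hv]
        show x (η (φ k)) = (δ/2)⁻¹ • x ((δ/2) • η (φ k))
        conv_rhs => rw [x.map_smul_of_tower, smul_smul, inv_mul_cancel₀ hδ2.ne', one_smul]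
      rw [h1, hz]
      exact hconv.const_smul _
    have hsumz : Summable (fun n => ‖p n z‖ ^ 2) :=
      summable_of_sum_range_le (fun n => sq_nonneg _) (fun n => hbessel (Finset.range n) z)
    have htend0 : Filter.Tendsto (fun n => ‖p n z‖) Filter.atTop (nhds 0) := by
      have h1 := hsumz.tendsto_atTop_zero
      have h2 : Filter.Tendsto (fun n => Real.sqrt (‖p n z‖ ^ 2)) Filter.atTop
          (nhds (Real.sqrt 0)) := (Real.continuous_sqrt.tendsto 0).comp h1
      have h3 : (fun n => Real.sqrt (‖p n z‖ ^ 2)) = fun n => ‖p n z‖ :=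
        funext fun n => Real.sqrt_sq (norm_nonneg _)
      rwa [h3, Real.sqrt_zero] at h2
    have hidxtend : Filter.Tendsto (fun k => idx (φ k)) Filter.atTop Filter.atTop := by
      have hinj : Function.Injective (fun k => idx (φ k)) := hidx_inj.comp hφ.injective
      have h4 := hinj.tendsto_cofinite
      rwa [Nat.cofinite_eq_atTop] at h4
    have hptend : Filter.Tendsto (fun k => ‖p (idx (φ k)) z‖) Filter.atTop (nhds 0) :=
      htend0.comp hidxtend
    have hdiff : Filter.Tendsto (fun k => ‖x (η (φ k)) - z‖) Filter.atTop (nhds 0) := by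
      have := (hconv'.sub (tendsto_const_nhds (x := z))).norm
      simpa using this
    have hsum2 : Filter.Tendsto (fun k => ‖x (η (φ k)) - z‖ + ‖p (idx (φ k)) z‖)
        Filter.atTop (nhds 0) := by
      have h5 := hdiff.add hptend
      rwa [add_zero] at h5
    obtain ⟨k, hk⟩ := (hsum2.eventually (gt_mem_nhds hε)).exists
    have hub : ‖p (idx (φ k)) (x (η (φ k)))‖ ≤ ‖x (η (φ k)) - z‖ + ‖p (idx (φ k)) z‖ := by
      calc ‖p (idx (φ k)) (x (η (φ k)))‖
          = ‖p (idx (φ k)) (x (η (φ k)) - z) + p (idx (φ k)) z‖ := by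
            rw [map_sub, sub_add_cancel]
        _ ≤ ‖p (idx (φ k)) (x (η (φ k)) - z)‖ + ‖p (idx (φ k)) z‖ := norm_add_le _ _
        _ ≤ ‖x (η (φ k)) - z‖ + ‖p (idx (φ k)) z‖ :=
            add_le_add_left (hcontr _ _) _
    have := hηlow (φ k)
    linarith
  -- summability
  have hsummable : Summable (fun i => p i * x * p i) := by
    rw [summable_iff_vanishing_norm]
    intro ε hε
    refine ⟨(hkey (ε/2) (by linarith)).toFinset, fun t ht => ?_⟩
    have hb : ∀ i ∈ t, ‖p i * x * p i‖ ≤ ε/2 := by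
      intro i hi
      by_contra hgt
      push_neg at hgt
      exact (Finset.disjoint_left.1 ht hi) ((Set.Finite.mem_toFinset _).2 hgt)
    calc ‖∑ i ∈ t, (p i * x * p i)‖ ≤ ε/2 := hblock t (ε/2) (by linarith) hb
      _ < ε := by linarith
  refine ⟨hsummable, ?_⟩
  have hcomp_each : ∀ i, IsCompactOperator ⇑(p i * x * p i) := by
    intro i
    have h1 : IsCompactOperator (⇑(p i) ∘ ⇑x) := hx.clm_comp (p i)
    have h2 : IsCompactOperator ((⇑(p i) ∘ ⇑x) ∘ ⇑(p i)) := h1.comp_clm (p i)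
    convert h2 using 1
    rfl
  have hcomp_fin : ∀ s : Finset ℕ, IsCompactOperator ⇑(∑ i ∈ s, (p i * x * p i)) := by
    intro s
    induction s using Finset.induction_on with
    | empty => simpa using isCompactOperator_zero
    | insert a s' hnotmem ih =>
        rw [Finset.sum_insert hnotmem]
        have h6 := (hcomp_each a).add ih
        rwa [← ContinuousLinearMap.coe_add'] at h6
  exact isCompactOperator_of_tendsto hsummable.hasSum (Filter.Eventually.of_forall hcomp_fin)
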